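/- arXiv:2407.00649 — 4 statements merged into one kernel-verified Lean document; each statement's English description precedes it below -/
import Mathlib

section
/- Let k_θ(x|z) be a kernel on ℝ^{d_x} × ℝ^{d_z}, parameterized by θ ∈ ℝ^{d_θ}, with ∫ k_θ(x|z) dx = 1 for all (θ, z), such that (θ, z) ↦ k_θ(x|z) is continuous for every x and sup_{θ,x,z} k_θ(x|z) ≤ B_k < ∞. Let p(·, y) be a nonnegative measurable function with 0 < p(y) := ∫ p(x, y) dx < ∞. Define q_{θ,r}(x) := ∫ k_θ(x|z) r(dz) and E(θ, r) := ∫ q_{θ,r}(x) log(q_{θ,r}(x)/p(x, y)) dx ∈ (−∞, +∞]. Then E is jointly lower semicontinuous: for every sequence (θ_n, r_n) with θ_n → θ in ℝ^{d_θ} and r_n → r weakly in the space of probability measures on ℝ^{d_z}, one has liminf_{n→∞} E(θ_n, r_n) ≥ E(θ, r). -/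
open MeasureTheory Filter Topology
open scoped ENNReal NNReal

/-- The integral of a real function, interpreted as an extended real number in `(-∞, +∞]`
when the negative part is integrable: positive part minus negative part, as `EReal`s. -/
noncomputable def eintegral {α : Type*} [MeasurableSpace α] (μ : Measure α) (f : α → ℝ) : EReal :=
  ((∫⁻ x, ENNReal.ofReal (f x) ∂μ : ℝ≥0∞) : EReal) -
    ((∫⁻ x, ENNReal.ofReal (-f x) ∂μ : ℝ≥0∞) : EReal)

/-- The semi-implicit density `q_{θ,r}(x) = ∫ k_θ(x|z) r(dz)`. -/
noncomputable def qdens {dθ dx dz : ℕ}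
    (k : (Fin dθ → ℝ) → (Fin dx → ℝ) → (Fin dz → ℝ) → ℝ)
    (θ : Fin dθ → ℝ) (r : ProbabilityMeasure (Fin dz → ℝ)) (x : Fin dx → ℝ) : ℝ :=
  ∫ z, k θ x z ∂(r : Measure (Fin dz → ℝ))

/-- The free energy `E(θ, r) = ∫ q_{θ,r} log(q_{θ,r}/p(·, y)) ∈ (-∞, +∞]`. -/
noncomputable def freeEnergy {dθ dx dz : ℕ}
    (k : (Fin dθ → ℝ) → (Fin dx → ℝ) → (Fin dz → ℝ) → ℝ)
    (p : (Fin dx → ℝ) → ℝ)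
    (θ : Fin dθ → ℝ) (r : ProbabilityMeasure (Fin dz → ℝ)) : EReal :=
  eintegral volume (fun x => qdens k θ r x * Real.log (qdens k θ r x / p x))

lemma mul_log_div_ge {q px : ℝ} (hq : 0 ≤ q) (hpx : 0 ≤ px) :
    -px ≤ q * Real.log (q / px) := by
  rcases eq_or_lt_of_le hpx with h | h
  · simp [← h, div_zero, Real.log_zero]
  rcases eq_or_lt_of_le hq with h' | h'
  · simp [← h']; linarith
  · have hlog := Real.one_sub_inv_le_log_of_pos (div_pos h' h)
    rw [inv_div] at hlog
    have h2 : q - px ≤ q * Real.log (q / px) := by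
      have := mul_le_mul_of_nonneg_left hlog hq
      calc q - px = q * (1 - px / q) := by field_simp
        _ ≤ q * Real.log (q / px) := this
    linarith

lemma qdens_tendsto {dθ dz : ℕ} (Bk : ℝ)
    (g : (Fin dθ → ℝ) → (Fin dz → ℝ) → ℝ)
    (hg_meas : ∀ θ', Measurable (g θ'))
    (hg_cont : Continuous (fun p : (Fin dθ → ℝ) × (Fin dz → ℝ) => g p.1 p.2))
    (hg_nonneg : ∀ θ' z, 0 ≤ g θ' z)
    (hg_bdd : ∀ θ' z, g θ' z ≤ Bk)
    (θseq : ℕ → (Fin dθ → ℝ)) (θ : Fin dθ → ℝ)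
    (rseq : ℕ → ProbabilityMeasure (Fin dz → ℝ)) (r : ProbabilityMeasure (Fin dz → ℝ))
    (hθ : Tendsto θseq atTop (𝓝 θ))
    (hr : Tendsto rseq atTop (𝓝 r)) :
    Tendsto (fun n => ∫ z, g (θseq n) z ∂(rseq n : Measure (Fin dz → ℝ))) atTop
      (𝓝 (∫ z, g θ z ∂(r : Measure (Fin dz → ℝ)))) := by
  have hBk : (0:ℝ) ≤ Bk := le_trans (hg_nonneg θ (fun _ => 0)) (hg_bdd θ (fun _ => 0))
  have hcz : ∀ θ', Continuous fun z => g θ' z := fun θ' =>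
    hg_cont.comp (Continuous.prodMk_right θ')
  have hnorm : ∀ θ' z, ‖g θ' z‖ ≤ Bk := by
    intro θ' z
    rw [Real.norm_eq_abs, abs_le]
    exact ⟨by linarith [hg_nonneg θ' z], hg_bdd θ' z⟩
  have hint : ∀ (θ' : Fin dθ → ℝ) (ν : ProbabilityMeasure (Fin dz → ℝ)),
      Integrable (fun z => g θ' z) (ν : Measure (Fin dz → ℝ)) := by
    intro θ' ν
    exact (integrable_const Bk).mono' ((hg_meas θ').aestronglyMeasurable)
      (ae_of_all _ fun z => hnorm θ' z)
  -- h2 : integrals of the fixed function converge by weak convergence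
  set f₀ : BoundedContinuousFunction (Fin dz → ℝ) ℝ :=
    BoundedContinuousFunction.ofNormedAddCommGroup (fun z => g θ z) (hcz θ) Bk (hnorm θ) with hf₀
  have h2 : Tendsto (fun n => ∫ z, g θ z ∂(rseq n : Measure (Fin dz → ℝ))) atTop
      (𝓝 (∫ z, g θ z ∂(r : Measure (Fin dz → ℝ)))) := by
    have := ProbabilityMeasure.tendsto_iff_forall_integral_tendsto.mp hr f₀
    simpa [hf₀] using this
  -- h1 : the difference tends to 0
  have h1 : Tendsto (fun n => (∫ z, g (θseq n) z ∂(rseq n : Measure (Fin dz → ℝ))) -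
      ∫ z, g θ z ∂(rseq n : Measure (Fin dz → ℝ))) atTop (𝓝 0) := by
    rw [NormedAddCommGroup.tendsto_nhds_zero]
    intro ε hε
    set δ : ℝ := ε / (2 * Bk + 2) with hδdef
    have hδpos : 0 < δ := by positivity
    -- tightness of the limit measure
    obtain ⟨m, hm⟩ : ∃ m : ℕ,
        (r : Measure (Fin dz → ℝ)) ((Metric.ball (0 : Fin dz → ℝ) m)ᶜ) < ENNReal.ofReal δ := by
      have hanti : Antitone fun m : ℕ => (Metric.ball (0 : Fin dz → ℝ) m)ᶜ := fun a b hab =>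
        Set.compl_subset_compl.2 (Metric.ball_subset_ball (by exact_mod_cast hab))
      have hiInter : ⋂ m : ℕ, (Metric.ball (0 : Fin dz → ℝ) m)ᶜ = ∅ := by
        ext z
        simp only [Set.mem_iInter, Set.mem_compl_iff, Metric.mem_ball, Set.mem_empty_iff_false,
          iff_false, not_forall, not_not]
        obtain ⟨m, hm⟩ := exists_nat_gt (dist z 0)
        exact ⟨m, hm⟩
      have htd := tendsto_measure_iInter_atTop (μ := (r : Measure (Fin dz → ℝ)))
        (fun m => (Metric.isOpen_ball.isClosed_compl.measurableSet).nullMeasurableSet)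
        hanti ⟨0, measure_ne_top _ _⟩
      rw [hiInter, measure_empty] at htd
      have := htd.eventually_lt_const (show (0:ℝ≥0∞) < ENNReal.ofReal δ by
        simpa using ENNReal.ofReal_pos.2 hδpos)
      obtain ⟨m, hm⟩ := this.exists
      exact ⟨m, hm⟩
    -- portmanteau: closed set upper bound eventually
    have hport : ∀ᶠ n in atTop,
        (rseq n : Measure (Fin dz → ℝ)) ((Metric.ball (0 : Fin dz → ℝ) m)ᶜ) < ENNReal.ofReal δ := by
      have hls := ProbabilityMeasure.limsup_measure_closed_le_of_tendsto hr
        (Metric.isOpen_ball.isClosed_compl (s := Metric.ball (0 : Fin dz → ℝ) m))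
      exact eventually_lt_of_limsup_lt (lt_of_le_of_lt hls hm)
    -- uniform convergence on the closed ball
    have huc : TendstoUniformlyOn (fun n z => g (θseq n) z) (fun z => g θ z) atTop
        (Metric.closedBall (0 : Fin dz → ℝ) m) := by
      set G : C((Fin dθ → ℝ) × (Fin dz → ℝ), ℝ) := ⟨fun q => g q.1 q.2, hg_cont⟩ with hG
      have ht : Tendsto (fun n => G.curry (θseq n)) atTop (𝓝 (G.curry θ)) :=
        ((G.curry).continuous.tendsto θ).comp hθ
      exact ContinuousMap.tendsto_iff_forall_isCompact_tendstoUniformlyOn.mp ht _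
        (isCompact_closedBall _ _)
    rw [Metric.tendstoUniformlyOn_iff] at huc
    filter_upwards [hport, huc δ hδpos] with n hn1 hn2
    set ν : Measure (Fin dz → ℝ) := (rseq n : Measure (Fin dz → ℝ)) with hν
    have : IsProbabilityMeasure ν := (rseq n).2
    set K : Set (Fin dz → ℝ) := Metric.closedBall (0 : Fin dz → ℝ) m with hK
    have hKme : MeasurableSet K := measurableSet_closedBall
    have hdi : Integrable (fun z => g (θseq n) z - g θ z) ν := (hint _ _).sub (hint _ _)
    have step1 : (∫ z, g (θseq n) z ∂ν) - ∫ z, g θ z ∂ν = ∫ z, (g (θseq n) z - g θ z) ∂ν :=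
      (integral_sub (hint _ _) (hint _ _)).symm
    have step2 : ‖∫ z, (g (θseq n) z - g θ z) ∂ν‖ ≤ ∫ z, ‖g (θseq n) z - g θ z‖ ∂ν :=
      norm_integral_le_integral_norm _
    have split : ∫ z, ‖g (θseq n) z - g θ z‖ ∂ν =
        (∫ z in K, ‖g (θseq n) z - g θ z‖ ∂ν) + ∫ z in Kᶜ, ‖g (θseq n) z - g θ z‖ ∂ν :=
      (integral_add_compl hKme hdi.norm).symm
    have bd1 : ∫ z in K, ‖g (θseq n) z - g θ z‖ ∂ν ≤ δ := by
      have h1' : ∫ z in K, ‖g (θseq n) z - g θ z‖ ∂ν ≤ ∫ _z in K, δ ∂ν := by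
        apply setIntegral_mono_on (hdi.norm.integrableOn) (integrableOn_const (?_ : ν K < ∞).ne) hKme
        · intro z hz
          have := hn2 z hz
          rw [Real.dist_eq, abs_sub_comm] at this
          exact le_of_lt this
        · exact measure_lt_top ν K
      have h2' : ∫ _z in K, δ ∂ν = (ν K).toReal * δ := by
        rw [setIntegral_const, smul_eq_mul]; rfl
      rw [h2'] at h1'
      have : (ν K).toReal ≤ 1 := by
        have := prob_le_one (μ := ν) (s := K)
        simpa using ENNReal.toReal_mono ENNReal.one_ne_top this
      nlinarith [hδpos.le]
    have bd2 : ∫ z in Kᶜ, ‖g (θseq n) z - g θ z‖ ∂ν ≤ (2 * Bk) * δ := by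
      have hsub : (ν Kᶜ) ≤ ENNReal.ofReal δ :=
        le_of_lt (lt_of_le_of_lt (measure_mono (Set.compl_subset_compl.2
          Metric.ball_subset_closedBall)) hn1)
      have h1' : ∫ z in Kᶜ, ‖g (θseq n) z - g θ z‖ ∂ν ≤ ∫ _z in Kᶜ, (2 * Bk) ∂ν := by
        apply setIntegral_mono_on (hdi.norm.integrableOn) (integrableOn_const (?_ : ν Kᶜ < ∞).ne)
          hKme.compl
        · intro z _
          calc ‖g (θseq n) z - g θ z‖ ≤ ‖g (θseq n) z‖ + ‖g θ z‖ := norm_sub_le _ _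
            _ ≤ 2 * Bk := by linarith [hnorm (θseq n) z, hnorm θ z]
        · exact measure_lt_top ν Kᶜ
      have h2' : ∫ _z in Kᶜ, (2 * Bk : ℝ) ∂ν = (ν Kᶜ).toReal * (2 * Bk) := by
        rw [setIntegral_const, smul_eq_mul]; rfl
      have h3' : (ν Kᶜ).toReal ≤ δ := by
        have := ENNReal.toReal_mono ENNReal.ofReal_ne_top hsub
        rwa [ENNReal.toReal_ofReal hδpos.le] at this
      rw [h2'] at h1'
      nlinarith
    have total : ‖(∫ z, g (θseq n) z ∂ν) - ∫ z, g θ z ∂ν‖ ≤ δ * (2 * Bk + 1) := by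
      rw [step1]
      calc ‖∫ z, (g (θseq n) z - g θ z) ∂ν‖ ≤ ∫ z, ‖g (θseq n) z - g θ z‖ ∂ν := step2
        _ = _ := split
        _ ≤ δ + (2 * Bk) * δ := add_le_add bd1 bd2
        _ = δ * (2 * Bk + 1) := by ring
    calc ‖(∫ z, g (θseq n) z ∂ν) - ∫ z, g θ z ∂ν‖ ≤ δ * (2 * Bk + 1) := total
      _ < ε := by
          rw [hδdef]
          rw [div_mul_eq_mul_div, div_lt_iff₀ (by linarith : (0:ℝ) < 2 * Bk + 2)]
          nlinarith
  have := h1.add h2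
  simpa using this

/-- Joint lower semicontinuity of the free energy: if `θ_n → θ` in `ℝ^{d_θ}` and `r_n → r`
weakly in the space of probability measures, then `liminf E(θ_n, r_n) ≥ E(θ, r)`, provided
the kernel is bounded, normalized and continuous in `(θ, z)`, and the evidence is finite. -/
theorem free_energy_lower_semicontinuous {dθ dx dz : ℕ} (Bk : ℝ)
    (k : (Fin dθ → ℝ) → (Fin dx → ℝ) → (Fin dz → ℝ) → ℝ)
    (hk_meas : ∀ θ, Measurable (Function.uncurry (k θ)))
    (hk_cont : ∀ x, Continuous (fun p : (Fin dθ → ℝ) × (Fin dz → ℝ) => k p.1 x p.2))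
    (hk_nonneg : ∀ θ x z, 0 ≤ k θ x z)
    (hk_bdd : ∀ θ x z, k θ x z ≤ Bk)
    (hk_norm : ∀ θ z, ∫ x, k θ x z = 1)
    (p : (Fin dx → ℝ) → ℝ) (hp_meas : Measurable p) (hp_nonneg : ∀ x, 0 ≤ p x)
    (hpy_pos : 0 < ∫ x, p x)
    (θseq : ℕ → (Fin dθ → ℝ)) (θ : Fin dθ → ℝ)
    (rseq : ℕ → ProbabilityMeasure (Fin dz → ℝ)) (r : ProbabilityMeasure (Fin dz → ℝ))
    (hθ : Tendsto θseq atTop (𝓝 θ))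
    (hr : Tendsto rseq atTop (𝓝 r)) :
    freeEnergy k p θ r ≤ liminf (fun n => freeEnergy k p (θseq n) (rseq n)) atTop := by
  classical
  -- integrability of p
  have hp_int : Integrable p := by
    by_contra h
    rw [integral_undef h] at hpy_pos
    exact lt_irrefl 0 hpy_pos
  -- basic properties of qdens
  have hq_nonneg : ∀ θ' r' x, 0 ≤ qdens k θ' r' x := fun θ' r' x =>
    integral_nonneg fun z => hk_nonneg θ' x z
  have hq_meas : ∀ (θ' : Fin dθ → ℝ) (r' : ProbabilityMeasure (Fin dz → ℝ)),
      Measurable (fun x => qdens k θ' r' x) := fun θ' r' =>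
    ((hk_meas θ').stronglyMeasurable.integral_prod_right').measurable
  -- pointwise convergence of qdens
  have hq_tendsto : ∀ x, Tendsto (fun n => qdens k (θseq n) (rseq n) x) atTop
      (𝓝 (qdens k θ r x)) := by
    intro x
    exact qdens_tendsto Bk (fun θ' z => k θ' x z)
      (fun θ' => (hk_meas θ').comp measurable_prodMk_left)
      (hk_cont x) (fun θ' z => hk_nonneg θ' x z) (fun θ' z => hk_bdd θ' x z)
      θseq θ rseq r hθ hr
  -- the integrands
  set F : ℕ → (Fin dx → ℝ) → ℝ := fun n x =>
    qdens k (θseq n) (rseq n) x * Real.log (qdens k (θseq n) (rseq n) x / p x) with hF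
  set f : (Fin dx → ℝ) → ℝ := fun x =>
    qdens k θ r x * Real.log (qdens k θ r x / p x) with hf
  have hF_meas : ∀ n, Measurable (F n) := fun n =>
    (hq_meas _ _).mul (Real.measurable_log.comp ((hq_meas _ _).div hp_meas))
  have hf_meas : Measurable f :=
    (hq_meas _ _).mul (Real.measurable_log.comp ((hq_meas _ _).div hp_meas))
  -- pointwise convergence of the integrands
  have hF_tendsto : ∀ x, Tendsto (fun n => F n x) atTop (𝓝 (f x)) := by
    intro x
    by_cases hpx : p x = 0
    · have hzero : ∀ n, F n x = 0 := fun n => by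
        simp [hF, hpx, div_zero, Real.log_zero]
      have hzero' : f x = 0 := by simp [hf, hpx, div_zero, Real.log_zero]
      simp only [hzero, hzero']
      exact tendsto_const_nhds
    · have hpx' : 0 < p x := lt_of_le_of_ne (hp_nonneg x) (Ne.symm hpx)
      have key : ∀ t : ℝ, 0 ≤ t → t * Real.log (t / p x) =
          t * Real.log t - t * Real.log (p x) := by
        intro t ht
        rcases eq_or_lt_of_le ht with h | h
        · simp [← h]
        · rw [Real.log_div h.ne' hpx, mul_sub]
      have hc : Continuous fun t : ℝ => t * Real.log t - t * Real.log (p x) :=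
        Real.continuous_mul_log.sub (continuous_id.mul continuous_const)
      have htd := (hc.tendsto (qdens k θ r x)).comp (hq_tendsto x)
      have e1 : (fun n => F n x) = fun n =>
          qdens k (θseq n) (rseq n) x * Real.log (qdens k (θseq n) (rseq n) x) -
          qdens k (θseq n) (rseq n) x * Real.log (p x) :=
        funext fun n => key _ (hq_nonneg _ _ _)
      have e2 : f x = qdens k θ r x * Real.log (qdens k θ r x) -
          qdens k θ r x * Real.log (p x) := key _ (hq_nonneg _ _ _)
      rw [e1, e2]
      exact htd
  -- lower bound on the integrands
  have hlbF : ∀ n x, -(p x) ≤ F n x := fun n x =>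
    mul_log_div_ge (hq_nonneg _ _ _) (hp_nonneg x)
  have hlbf : ∀ x, -(p x) ≤ f x := fun x =>
    mul_log_div_ge (hq_nonneg _ _ _) (hp_nonneg x)
  -- the dominating function
  have hP : (∫⁻ x, ENNReal.ofReal (p x)) ≠ ∞ := by
    have heq : (∫⁻ x, ENNReal.ofReal (p x)) = ∫⁻ x, (‖p x‖₊ : ℝ≥0∞) :=
      lintegral_congr fun x => (Real.enorm_eq_ofReal (hp_nonneg x)).symm
    rw [heq]
    exact hp_int.2.ne
  -- positive and negative parts
  set A : ℝ≥0∞ := ∫⁻ x, ENNReal.ofReal (f x) with hA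
  set B : ℝ≥0∞ := ∫⁻ x, ENNReal.ofReal (-f x) with hB
  set An : ℕ → ℝ≥0∞ := fun n => ∫⁻ x, ENNReal.ofReal (F n x) with hAn
  set Bn : ℕ → ℝ≥0∞ := fun n => ∫⁻ x, ENNReal.ofReal (-(F n x)) with hBn
  -- dominated convergence for the negative parts
  have hB_tendsto : Tendsto Bn atTop (𝓝 B) := by
    apply tendsto_lintegral_of_dominated_convergence (fun x => ENNReal.ofReal (p x))
    · exact fun n => ((hF_meas n).neg).ennreal_ofReal
    · intro n
      refine ae_of_all _ fun x => ENNReal.ofReal_le_ofReal ?_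
      linarith [hlbF n x]
    · exact hP
    · refine ae_of_all _ fun x => ?_
      exact (ENNReal.continuous_ofReal.tendsto _).comp ((hF_tendsto x).neg)
  -- Fatou for the positive parts
  have hA_le : A ≤ liminf An atTop := by
    have heq : A = ∫⁻ x, liminf (fun n => ENNReal.ofReal (F n x)) atTop :=
      lintegral_congr fun x =>
        ((ENNReal.continuous_ofReal.tendsto _).comp (hF_tendsto x)).liminf_eq.symm
    rw [heq]
    exact lintegral_liminf_le fun n => (hF_meas n).ennreal_ofReal
  -- pass to EReal
  have hmono : Monotone (fun a : ℝ≥0∞ => (a : EReal)) := fun a b hab =>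
    EReal.coe_ennreal_le_coe_ennreal_iff.2 hab
  have hliminf_coe : ((liminf An atTop : ℝ≥0∞) : EReal) =
      liminf (fun n => ((An n : ℝ≥0∞) : EReal)) atTop := by
    have := hmono.map_liminf_of_continuousAt (F := atTop) An
      (continuous_coe_ennreal_ereal.continuousAt)
    exact this
  have hA_le' : ((A : ℝ≥0∞) : EReal) ≤ liminf (fun n => ((An n : ℝ≥0∞) : EReal)) atTop := by
    rw [← hliminf_coe]
    exact hmono hA_le
  have hB_tendsto' : Tendsto (fun n => ((Bn n : ℝ≥0∞) : EReal)) atTop (𝓝 ((B : ℝ≥0∞) : EReal)) :=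
    (continuous_coe_ennreal_ereal.tendsto _).comp hB_tendsto
  have hlimsupB : limsup (fun n => ((Bn n : ℝ≥0∞) : EReal)) atTop = ((B : ℝ≥0∞) : EReal) :=
    hB_tendsto'.limsup_eq
  -- unfold freeEnergy
  have hfe : freeEnergy k p θ r = ((A : ℝ≥0∞) : EReal) - ((B : ℝ≥0∞) : EReal) := rfl
  have hfen : ∀ n, freeEnergy k p (θseq n) (rseq n) =
      ((An n : ℝ≥0∞) : EReal) - ((Bn n : ℝ≥0∞) : EReal) := fun n => rfl
  rw [hfe]
  simp only [hfen]
  -- EReal liminf arithmetic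
  have key : liminf (fun n => ((An n : ℝ≥0∞) : EReal) - ((Bn n : ℝ≥0∞) : EReal)) atTop ≥
      liminf (fun n => ((An n : ℝ≥0∞) : EReal)) atTop +
        liminf (fun n => -((Bn n : ℝ≥0∞) : EReal)) atTop := by
    have := EReal.le_liminf_add (f := atTop) (u := fun n => ((An n : ℝ≥0∞) : EReal))
      (v := fun n => -((Bn n : ℝ≥0∞) : EReal))
    have heq : (fun n => ((An n : ℝ≥0∞) : EReal)) + (fun n => -((Bn n : ℝ≥0∞) : EReal)) =
        fun n => ((An n : ℝ≥0∞) : EReal) - ((Bn n : ℝ≥0∞) : EReal) :=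
      funext fun n => (sub_eq_add_neg _ _).symm
    rwa [heq] at this
  have hnegB : liminf (fun n => -((Bn n : ℝ≥0∞) : EReal)) atTop = -((B : ℝ≥0∞) : EReal) := by
    have := EReal.liminf_neg (f := atTop) (v := fun n => ((Bn n : ℝ≥0∞) : EReal))
    rw [hlimsupB] at this
    exact this
  rw [hnegB] at key
  refine le_trans ?_ key
  rw [sub_eq_add_neg]
  exact add_le_add_left hA_le' _
end

section
/- Let d ≥ 1 and consider the kernel k_θ(x|z) := (2π)^{−d/2} exp(−‖x − θ‖²/2) on ℝ^d × ℝ (a Gaussian density in x with mean θ, not depending on z), and let p(x, y) := c · (2π)^{−d/2} exp(−‖x‖²/2) for a constant c > 0 (so the posterior p(·|y) is the standard Gaussian and p(y) = c). Then: (i) for every probability measure r on ℝ, q_{θ,r}(x) := ∫ k_θ(x|z) r(dz) equals the Gaussian density with mean θ and identity covariance, and E(θ, r) := ∫ q_{θ,r} log(q_{θ,r}/p(·, y)) = ½‖θ‖² − log c; (ii) for any fixed θ₀ and β := ½‖θ₀‖² − log c, the sublevel set {(θ, r) : E(θ, r) ≤ β} contains the sequence (θ₀, δ_n), n ∈ ℕ,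 where δ_n is the Dirac measure at n, and the family {δ_n : n ∈ ℕ} is not tight, so this sequence has no subsequence converging in ℝ^d × P(ℝ) (with the weak topology on P(ℝ)). In particular E is not coercive: it has a sublevel set that is not relatively compact. -/
open MeasureTheory Filter Topology Real
open scoped RealInnerProductSpace ENNReal

variable {d : ℕ}

lemma integrable_gauss (b : ℝ) (hb : 0 < b) :
    Integrable (fun x : EuclideanSpace ℝ (Fin d) => Real.exp (-b * ‖x‖ ^ 2)) := by
  have h := (GaussianFourier.integrable_cexp_neg_mul_sq_norm_add (V := EuclideanSpace ℝ (Fin d))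
    (b := (b : ℂ)) (by simpa using hb) 0 0).norm
  refine h.congr (Filter.Eventually.of_forall fun v => ?_)
  simp only [Complex.norm_exp]
  norm_cast
  simp

lemma gauss_mass : ∫ x : EuclideanSpace ℝ (Fin d), Real.exp (-(1/2) * ‖x‖ ^ 2)
    = (2 * π) ^ ((d : ℝ) / 2) := by
  rw [GaussianFourier.integral_rexp_neg_mul_sq_norm (by norm_num : (0:ℝ) < 1/2)]
  rw [finrank_euclideanSpace_fin]
  norm_num
  ring_nf

lemma integrable_gauss_inner (θ : EuclideanSpace ℝ (Fin d)) :
    Integrable (fun x : EuclideanSpace ℝ (Fin d) =>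
      Real.exp (-(1/2) * ‖x‖ ^ 2) * ⟪x, θ⟫) := by
  refine Integrable.mono' ((integrable_gauss (1/4) (by norm_num)).const_mul ‖θ‖)
    ?_ (Filter.Eventually.of_forall fun x => ?_)
  · exact ((Real.continuous_exp.comp (by continuity)).mul
      (continuous_id.inner continuous_const)).aestronglyMeasurable
  · have h1 : |⟪x, θ⟫| ≤ ‖x‖ * ‖θ‖ := abs_real_inner_le_norm x θ
    have h2 : ‖x‖ ≤ Real.exp (‖x‖ ^ 2 / 4) := by
      have h3 := Real.add_one_le_exp (‖x‖ ^ 2 / 4)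
      nlinarith [sq_nonneg (‖x‖ / 2 - 1)]
    have h4 : Real.exp (-(1/2) * ‖x‖ ^ 2) * ‖x‖ ≤ Real.exp (-(1/4) * ‖x‖ ^ 2) := by
      calc Real.exp (-(1/2) * ‖x‖ ^ 2) * ‖x‖
          ≤ Real.exp (-(1/2) * ‖x‖ ^ 2) * Real.exp (‖x‖ ^ 2 / 4) :=
            mul_le_mul_of_nonneg_left h2 (Real.exp_pos _).le
        _ = Real.exp (-(1/4) * ‖x‖ ^ 2) := by rw [← Real.exp_add]; ring_nf
    rw [Real.norm_eq_abs, abs_mul, abs_of_pos (Real.exp_pos _)]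
    calc Real.exp (-(1/2) * ‖x‖ ^ 2) * |⟪x, θ⟫|
        ≤ Real.exp (-(1/2) * ‖x‖ ^ 2) * (‖x‖ * ‖θ‖) :=
          mul_le_mul_of_nonneg_left h1 (Real.exp_pos _).le
      _ ≤ ‖θ‖ * Real.exp (-(1/4) * ‖x‖ ^ 2) := by
          nlinarith [norm_nonneg θ, norm_nonneg x, Real.exp_pos (-(1/2) * ‖x‖ ^ 2)]

lemma gauss_inner_zero (θ : EuclideanSpace ℝ (Fin d)) :
    ∫ x : EuclideanSpace ℝ (Fin d), Real.exp (-(1/2) * ‖x‖ ^ 2) * ⟪x, θ⟫ = 0 := by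
  have h := MeasureTheory.integral_neg_eq_self
    (fun x : EuclideanSpace ℝ (Fin d) => Real.exp (-(1/2) * ‖x‖ ^ 2) * ⟪x, θ⟫) volume
  simp only [norm_neg, inner_neg_left, mul_neg] at h
  rw [integral_neg] at h
  linarith

lemma gauss_integral_key (θ : EuclideanSpace ℝ (Fin d)) (a : ℝ) :
    ∫ x : EuclideanSpace ℝ (Fin d),
      (2 * π) ^ (-(d : ℝ) / 2) * Real.exp (-‖x - θ‖ ^ 2 / 2) * (a + ⟪x, θ⟫)
      = a + ‖θ‖ ^ 2 := by
  have hshift := MeasureTheory.integral_add_right_eq_self (μ := volume)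
    (fun x : EuclideanSpace ℝ (Fin d) =>
      (2 * π) ^ (-(d : ℝ) / 2) * Real.exp (-‖x - θ‖ ^ 2 / 2) * (a + ⟪x, θ⟫)) θ
  rw [← hshift]
  have heq : ∀ x : EuclideanSpace ℝ (Fin d),
      (2 * π) ^ (-(d:ℝ)/2) * Real.exp (-‖x + θ - θ‖ ^ 2 / 2) * (a + ⟪x + θ, θ⟫)
      = ((2 * π) ^ (-(d:ℝ)/2) * (a + ‖θ‖^2)) * Real.exp (-(1/2) * ‖x‖ ^ 2)
        + (2 * π) ^ (-(d:ℝ)/2) * (Real.exp (-(1/2) * ‖x‖ ^ 2) * ⟪x, θ⟫) := by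
    intro x
    rw [add_sub_cancel_right, inner_add_left, real_inner_self_eq_norm_sq]
    ring_nf
  simp only [heq]
  rw [integral_add ((integrable_gauss (1/2) (by norm_num)).const_mul _)
      ((integrable_gauss_inner θ).const_mul _),
    MeasureTheory.integral_const_mul, MeasureTheory.integral_const_mul, gauss_mass, gauss_inner_zero, mul_zero, add_zero]
  have h1 : (2 * π : ℝ) ^ (-(d:ℝ)/2) * (2 * π) ^ ((d:ℝ)/2) = 1 := by
    rw [← Real.rpow_add (by positivity), neg_div, neg_add_cancel, Real.rpow_zero]
  calc (2 * π : ℝ) ^ (-(d:ℝ)/2) * (a + ‖θ‖^2) * (2 * π) ^ ((d:ℝ)/2)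
      = ((2 * π : ℝ) ^ (-(d:ℝ)/2) * (2 * π) ^ ((d:ℝ)/2)) * (a + ‖θ‖^2) := by ring
    _ = a + ‖θ‖^2 := by rw [h1, one_mul]

/-- Non-coercivity of the (unregularized) free energy. For the `z`-independent Gaussian kernel
`k_θ(x|z) = N(x; θ, I)` and target `p(x, y) = c · N(x; 0, I)`:
(i) `q_{θ,r} = N(θ, I)` for every mixing measure `r`, and `E(θ, r) = ½‖θ‖² − log c`;
(ii) the sublevel set `{E ≤ β}`, `β = ½‖θ₀‖² − log c`, contains `(θ₀, δ_n)` for all `n`, the family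
of Diracs `{δ_n}` is not tight, the sequence `(θ₀, δ_n)` has no convergent subsequence in
`ℝ^d × P(ℝ)`, and the sublevel set is not contained in any compact set (non-coercivity). -/
theorem free_energy_not_coercive (d : ℕ) (hd : 1 ≤ d) (c : ℝ) (hc : 0 < c)
    (k : EuclideanSpace ℝ (Fin d) → EuclideanSpace ℝ (Fin d) → ℝ)
    (hk : ∀ θ x, k θ x = (2 * Real.pi) ^ (-(d : ℝ) / 2) * Real.exp (-‖x - θ‖ ^ 2 / 2))
    (p : EuclideanSpace ℝ (Fin d) → ℝ)
    (hp : ∀ x, p x = c * ((2 * Real.pi) ^ (-(d : ℝ) / 2) * Real.exp (-‖x‖ ^ 2 / 2)))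
    (q : EuclideanSpace ℝ (Fin d) → ProbabilityMeasure ℝ → EuclideanSpace ℝ (Fin d) → ℝ)
    (hq : ∀ θ r x, q θ r x = ∫ _z, k θ x ∂(r : Measure ℝ))
    (E : EuclideanSpace ℝ (Fin d) → ProbabilityMeasure ℝ → ℝ)
    (hE : ∀ θ r, E θ r = ∫ x, q θ r x * Real.log (q θ r x / p x))
    (θ₀ : EuclideanSpace ℝ (Fin d)) (β : ℝ) (hβ : β = ‖θ₀‖ ^ 2 / 2 - Real.log c)
    (δ : ℕ → ProbabilityMeasure ℝ)
    (hδ : ∀ n : ℕ, (δ n : Measure ℝ) = Measure.dirac (n : ℝ)) :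
    (∀ θ r x, q θ r x = (2 * Real.pi) ^ (-(d : ℝ) / 2) * Real.exp (-‖x - θ‖ ^ 2 / 2)) ∧
    (∀ θ r, E θ r = ‖θ‖ ^ 2 / 2 - Real.log c) ∧
    (∀ n : ℕ, E θ₀ (δ n) ≤ β) ∧
    ¬ (∀ ε : ℝ, 0 < ε → ∃ K : Set ℝ, IsCompact K ∧
        ∀ n : ℕ, 1 - ε ≤ ((δ n : Measure ℝ) K).toReal) ∧
    ¬ (∃ φ : ℕ → ℕ, StrictMono φ ∧
        ∃ L : EuclideanSpace ℝ (Fin d) × ProbabilityMeasure ℝ,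
          Tendsto (fun n => (θ₀, δ (φ n))) atTop (𝓝 L)) ∧
    ¬ (∃ K : Set (EuclideanSpace ℝ (Fin d) × ProbabilityMeasure ℝ), IsCompact K ∧
        {m : EuclideanSpace ℝ (Fin d) × ProbabilityMeasure ℝ | E m.1 m.2 ≤ β} ⊆ K) := by
  have hN : (0:ℝ) < (2 * Real.pi) ^ (-(d : ℝ) / 2) :=
    Real.rpow_pos_of_pos (by positivity) _
  have part1 : ∀ θ r x, q θ r x
      = (2 * Real.pi) ^ (-(d : ℝ) / 2) * Real.exp (-‖x - θ‖ ^ 2 / 2) := by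
    intro θ r x
    rw [hq, hk]
    simp
  have part2 : ∀ θ r, E θ r = ‖θ‖ ^ 2 / 2 - Real.log c := by
    intro θ r
    rw [hE]
    have hint : ∀ x, q θ r x * Real.log (q θ r x / p x)
        = (2 * Real.pi) ^ (-(d:ℝ)/2) * Real.exp (-‖x - θ‖ ^ 2 / 2)
          * ((-Real.log c - ‖θ‖ ^ 2 / 2) + ⟪x, θ⟫) := by
      intro x
      rw [part1, hp]
      congr 1
      rw [Real.log_div (by positivity) (by positivity),
          Real.log_mul (by positivity) (Real.exp_ne_zero _),
          Real.log_mul (by positivity) (by positivity),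
          Real.log_mul (by positivity) (Real.exp_ne_zero _),
          Real.log_exp, Real.log_exp, norm_sub_sq_real]
      ring
    simp only [hint]
    rw [gauss_integral_key θ (-Real.log c - ‖θ‖ ^ 2 / 2)]
    ring
  have part3 : ∀ n : ℕ, E θ₀ (δ n) ≤ β := by
    intro n
    rw [part2, hβ]
  have part5 : ¬ (∃ φ : ℕ → ℕ, StrictMono φ ∧
      ∃ L : EuclideanSpace ℝ (Fin d) × ProbabilityMeasure ℝ,
        Tendsto (fun n => (θ₀, δ (φ n))) atTop (𝓝 L)) := by
    rintro ⟨φ, hφ, L, hL⟩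
    have hL2 : Tendsto (fun n => δ (φ n)) atTop (𝓝 L.2) :=
      (continuous_snd.tendsto L).comp hL
    have hmono : Monotone (fun m : ℕ => Set.Ioo (-(m:ℝ)) (m:ℝ)) := by
      intro i j hij
      exact Set.Ioo_subset_Ioo (neg_le_neg (by exact_mod_cast hij)) (by exact_mod_cast hij)
    have hunion : (⋃ m : ℕ, Set.Ioo (-(m:ℝ)) (m:ℝ)) = Set.univ := by
      ext x
      simp only [Set.mem_iUnion, Set.mem_univ, iff_true, Set.mem_Ioo]
      obtain ⟨m, hm⟩ := exists_nat_gt |x|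
      obtain ⟨h1, h2⟩ := abs_lt.mp hm
      exact ⟨m, h1, h2⟩
    have hU := tendsto_measure_iUnion_atTop (μ := (L.2 : Measure ℝ)) hmono
    rw [hunion, measure_univ] at hU
    have hev : ∀ᶠ m : ℕ in atTop,
        (1/2 : ℝ≥0∞) < (L.2 : Measure ℝ) (Set.Ioo (-(m:ℝ)) (m:ℝ)) :=
      hU.eventually (eventually_gt_nhds (by norm_num))
    obtain ⟨m, hm⟩ := hev.exists
    have hopen := MeasureTheory.ProbabilityMeasure.le_liminf_measure_open_of_tendsto hL2
      (isOpen_Ioo (a := -(m:ℝ)) (b := (m:ℝ)))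
    have hz : ∀ᶠ n : ℕ in atTop,
        ((δ (φ n) : Measure ℝ)) (Set.Ioo (-(m:ℝ)) (m:ℝ)) = 0 := by
      filter_upwards [eventually_ge_atTop m] with n hn
      rw [hδ, Measure.dirac_apply' _ measurableSet_Ioo, Set.indicator_of_notMem]
      simp only [Set.mem_Ioo, not_and, not_lt]
      intro _
      exact_mod_cast hn.trans hφ.le_apply
    have hlim : Filter.liminf
        (fun n : ℕ => ((δ (φ n) : Measure ℝ)) (Set.Ioo (-(m:ℝ)) (m:ℝ))) atTop = 0 := by
      rw [Filter.liminf_congr hz]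
      exact Filter.liminf_const 0
    have : (1/2 : ℝ≥0∞) < 0 := lt_of_lt_of_le hm (hopen.trans (le_of_eq hlim))
    simp at this
  refine ⟨part1, part2, part3, ?_, part5, ?_⟩
  · intro h
    obtain ⟨K, hK, hb⟩ := h (1/2) (by norm_num)
    obtain ⟨rr, hr⟩ := hK.isBounded.subset_closedBall 0
    obtain ⟨n, hn⟩ := exists_nat_gt rr
    have hnot : (n:ℝ) ∉ K := by
      intro hmem
      have h2 := hr hmem
      rw [Metric.mem_closedBall, Real.dist_eq, sub_zero,
        abs_of_nonneg (Nat.cast_nonneg n)] at h2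
      linarith
    have hb' := hb n
    rw [hδ, Measure.dirac_apply' _ hK.measurableSet, Set.indicator_of_notMem hnot] at hb'
    norm_num at hb'
  · rintro ⟨K, hK, hsub⟩
    have hmem : ∀ n : ℕ, (θ₀, δ n) ∈ K := fun n => hsub (part3 n)
    obtain ⟨L, _, φ, hφ, hconv⟩ := hK.tendsto_subseq hmem
    exact part5 ⟨φ, hφ, L, by simpa [Function.comp_def] using hconv⟩
end

section
/- Let q be a probability density on ℝ^{d_x} and p(·, y) > 0 measurable, and for γ ≥ 0 define E^γ := ∫ q(x) log((q(x) + γ)/p(x, y)) dx ∈ (−∞, +∞]. Suppose that for some γ₀ > 0 one has ∫ q(x) log(1 + γ₀/q(x)) dx < ∞ (the integral taken over {q > 0}). Then E^γ ≥ E⁰ for all γ > 0, γ ↦ E^γ − E⁰ = ∫ q log(1 + γ/q) is nondecreasing in γ, and lim_{γ→0⁺} E^γ = E⁰. In particular, for the semi-implicit density q = q_{θ,r}, the regularized free energy E^γ_λ(θ, r) := E^γ(θ, r) + R_λ(θ, r) converges pointwise to E_λ(θ, r) := E(θ, r) + R_λ(θ, r) as γ → 0⁺, which provides a recovery sequence (the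 constant sequence) for Γ-convergence. -/
open MeasureTheory Filter Topology
open scoped ENNReal NNReal

private lemma coe_ennreal_eq_toReal (x : ℝ≥0∞) (hx : x ≠ ⊤) :
    (x : EReal) = ((x.toReal : ℝ) : EReal) := by
  conv_lhs => rw [← ENNReal.ofReal_toReal hx]
  rw [EReal.coe_ennreal_ofReal, max_eq_left ENNReal.toReal_nonneg]

private lemma ofReal_add_split (a c : ℝ) (hc : 0 ≤ c) :
    ENNReal.ofReal (a + c) + ENNReal.ofReal (-a) =
      ENNReal.ofReal a + ENNReal.ofReal (-(a + c)) + ENNReal.ofReal c := by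
  rcases le_or_gt 0 a with ha | ha
  · rw [ENNReal.ofReal_of_nonpos (by linarith : -a ≤ 0),
      ENNReal.ofReal_of_nonpos (by linarith : -(a + c) ≤ 0), ENNReal.ofReal_add ha hc]
    ring
  · rcases le_or_gt 0 (a + c) with hac | hac
    · rw [ENNReal.ofReal_of_nonpos ha.le, ENNReal.ofReal_of_nonpos (by linarith : -(a + c) ≤ 0),
        zero_add, zero_add, ← ENNReal.ofReal_add hac (by linarith : (0:ℝ) ≤ -a)]
      congr 1; ring
    · rw [ENNReal.ofReal_of_nonpos ha.le, ENNReal.ofReal_of_nonpos hac.le, zero_add, zero_add,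
        ← ENNReal.ofReal_add (by linarith : (0:ℝ) ≤ -(a + c)) hc]
      congr 1; ring

private lemma ereal_sub_helper (P₀ Pγ N₀ Nγ d : ℝ≥0∞) (hd : d ≠ ⊤) (hNle : Nγ ≤ N₀)
    (hN : N₀ ≤ Nγ + d) (hkey : Pγ + N₀ = P₀ + Nγ + d) :
    (Pγ : EReal) - Nγ = ((P₀ : EReal) - N₀) + d := by
  by_cases hN0 : N₀ = ⊤
  · have hNγt : Nγ = ⊤ := by
      by_contra h
      have : (⊤ : ℝ≥0∞) ≤ Nγ + d := hN0 ▸ hN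
      exact (ENNReal.add_ne_top.mpr ⟨h, hd⟩) (top_le_iff.mp this)
    rw [hNγt, hN0, EReal.coe_ennreal_top, EReal.sub_top, EReal.sub_top, EReal.bot_add]
  · have hNγ : Nγ ≠ ⊤ := fun h => hN0 (top_le_iff.mp (h ▸ hNle))
    by_cases hP0 : P₀ = ⊤
    · have hPγ : Pγ = ⊤ := by
        by_contra h
        have h1 : Pγ + N₀ ≠ ⊤ := ENNReal.add_ne_top.mpr ⟨h, hN0⟩
        rw [hkey, hP0] at h1
        simp at h1
      rw [hPγ, hP0, EReal.coe_ennreal_top, coe_ennreal_eq_toReal Nγ hNγ,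
        coe_ennreal_eq_toReal N₀ hN0, EReal.top_sub_coe, EReal.top_sub_coe,
        EReal.top_add_of_ne_bot (EReal.coe_ennreal_ne_bot d)]
    · have hPγ : Pγ ≠ ⊤ := by
        intro h
        rw [h, top_add] at hkey
        exact (ENNReal.add_ne_top.mpr ⟨ENNReal.add_ne_top.mpr ⟨hP0, hNγ⟩, hd⟩) hkey.symm
      have htr := congrArg ENNReal.toReal hkey
      rw [ENNReal.toReal_add hPγ hN0, ENNReal.toReal_add (ENNReal.add_ne_top.mpr ⟨hP0, hNγ⟩) hd,
        ENNReal.toReal_add hP0 hNγ] at htr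
      rw [coe_ennreal_eq_toReal Pγ hPγ, coe_ennreal_eq_toReal Nγ hNγ,
        coe_ennreal_eq_toReal P₀ hP0, coe_ennreal_eq_toReal N₀ hN0,
        coe_ennreal_eq_toReal d hd, ← EReal.coe_sub, ← EReal.coe_sub, ← EReal.coe_add]
      exact congrArg _ (by linarith)

/-- Monotone pointwise convergence `E^γ → E⁰` as `γ → 0⁺`: for a probability density `q` and
positive `p(·, y)`, with `E^γ = ∫ q log((q + γ)/p(·, y))`, one has `E^γ ≥ E⁰`,
`E^γ = E⁰ + ∫_{q>0} q log(1 + γ/q)` with the correction nondecreasing in `γ`, and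
`E^γ → E⁰` as `γ → 0⁺`; consequently `E^γ + R → E⁰ + R` for any regularizer value `R`,
providing a (constant) recovery sequence for Γ-convergence. -/
theorem gamma_energy_pointwise_convergence {dx : ℕ}
    (q : (Fin dx → ℝ) → ℝ) (hq_meas : Measurable q)
    (hq_nonneg : ∀ x, 0 ≤ q x) (hq_norm : ∫ x, q x = 1)
    (p : (Fin dx → ℝ) → ℝ) (hp_meas : Measurable p) (hp_pos : ∀ x, 0 < p x)
    (Eg : ℝ → EReal)
    (hEg : ∀ γ, Eg γ = eintegral volume (fun x => q x * Real.log ((q x + γ) / p x)))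
    (γ₀ : ℝ) (hγ₀ : 0 < γ₀)
    (hfin : ∫⁻ x in {x | 0 < q x}, ENNReal.ofReal (q x * Real.log (1 + γ₀ / q x)) < ⊤)
    (D : ℝ → ℝ≥0∞)
    (hD : ∀ γ, D γ = ∫⁻ x in {x | 0 < q x}, ENNReal.ofReal (q x * Real.log (1 + γ / q x)))
    (R : EReal) (hR : R ≠ ⊥) :
    (∀ γ : ℝ, 0 < γ → Eg 0 ≤ Eg γ) ∧
    (∀ γ : ℝ, 0 < γ → Eg γ = Eg 0 + ((D γ : ℝ≥0∞) : EReal)) ∧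
    (∀ γ₁ γ₂ : ℝ, 0 < γ₁ → γ₁ ≤ γ₂ → D γ₁ ≤ D γ₂) ∧
    Tendsto Eg (𝓝[>] (0 : ℝ)) (𝓝 (Eg 0)) ∧
    Tendsto (fun γ => Eg γ + R) (𝓝[>] (0 : ℝ)) (𝓝 (Eg 0 + R)) := by
  -- notation
  set f : ℝ → (Fin dx → ℝ) → ℝ := fun γ x => q x * Real.log ((q x + γ) / p x) with hf
  set g : ℝ → (Fin dx → ℝ) → ℝ := fun γ x => q x * Real.log (1 + γ / q x) with hg
  have hq_int : Integrable q := by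
    by_contra h
    rw [integral_undef h] at hq_norm
    norm_num at hq_norm
  have hf_meas : ∀ γ, Measurable (f γ) := fun γ =>
    hq_meas.mul (Real.measurable_log.comp ((hq_meas.add_const γ).div hp_meas))
  have hg_meas : ∀ γ, Measurable (g γ) := fun γ =>
    hq_meas.mul (Real.measurable_log.comp (measurable_const.add (measurable_const.div hq_meas)))
  have hg_nonneg : ∀ γ, 0 ≤ γ → ∀ x, 0 ≤ g γ x := by
    intro γ hγ x
    exact mul_nonneg (hq_nonneg x)
      (Real.log_nonneg (by nlinarith [div_nonneg hγ (hq_nonneg x)]))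
  have hsplit : ∀ γ, 0 ≤ γ → ∀ x, f γ x = f 0 x + g γ x := by
    intro γ hγ x
    by_cases hx : q x = 0
    · simp [hf, hg, hx]
    · have hqx : 0 < q x := (hq_nonneg x).lt_of_ne (Ne.symm hx)
      have hpx := hp_pos x
      have hmul : (q x + γ) / p x = (q x / p x) * (1 + γ / q x) := by
        field_simp
      have h2 : (0:ℝ) < 1 + γ / q x := by
        have := div_nonneg hγ hqx.le
        linarith
      show q x * Real.log ((q x + γ) / p x)
          = q x * Real.log ((q x + 0) / p x) + q x * Real.log (1 + γ / q x)
      rw [add_zero, hmul, Real.log_mul (by positivity) (ne_of_gt h2), mul_add]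
  -- pointwise monotonicity of the ofReal of g
  have hg_mono : ∀ γ₁ γ₂ : ℝ, 0 ≤ γ₁ → γ₁ ≤ γ₂ → ∀ x,
      ENNReal.ofReal (g γ₁ x) ≤ ENNReal.ofReal (g γ₂ x) := by
    intro γ₁ γ₂ h1 h12 x
    apply ENNReal.ofReal_le_ofReal
    by_cases hx : q x = 0
    · simp [hg, hx]
    · have hqx : 0 < q x := (hq_nonneg x).lt_of_ne (Ne.symm hx)
      have hd1 : 0 ≤ γ₁ / q x := div_nonneg h1 hqx.le
      apply mul_le_mul_of_nonneg_left _ (hq_nonneg x)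
      apply Real.log_le_log (by linarith)
      have : γ₁ / q x ≤ γ₂ / q x := by gcongr
      linarith
  -- D over the full space
  have hq_set : MeasurableSet {x | 0 < q x} := measurableSet_lt measurable_const hq_meas
  have hDfull : ∀ γ, D γ = ∫⁻ x, ENNReal.ofReal (g γ x) := by
    intro γ
    rw [hD γ, ← lintegral_indicator hq_set _]
    congr 1
    ext x
    by_cases hx : 0 < q x
    · simp [Set.indicator, hx, hg]
    · have hx0 : q x = 0 := le_antisymm (not_lt.mp hx) (hq_nonneg x)
      simp [Set.indicator, hx, hg, hx0]
  have hone : (∫⁻ x, ENNReal.ofReal (q x)) = 1 := by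
    rw [← MeasureTheory.ofReal_integral_eq_lintegral_ofReal hq_int
      (Filter.Eventually.of_forall hq_nonneg), hq_norm, ENNReal.ofReal_one]
  -- D is finite for every positive γ
  have hDγ₀ : D γ₀ ≠ ⊤ := by rw [hD]; exact hfin.ne
  have hDfin : ∀ γ : ℝ, 0 < γ → D γ ≠ ⊤ := by
    intro γ hγ
    set c := max (γ / γ₀) 1 with hc
    have hc1 : (1:ℝ) ≤ c := le_max_right _ _
    have hbound : ∀ x, g γ x ≤ q x * Real.log c + g γ₀ x := by
      intro x
      by_cases hx : q x = 0
      · simp [hg, hx]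
      · have hqx : 0 < q x := (hq_nonneg x).lt_of_ne (Ne.symm hx)
        have hd0 : 0 ≤ γ₀ / q x := div_nonneg hγ₀.le hqx.le
        have hγc : γ ≤ c * γ₀ := (div_le_iff₀ hγ₀).mp (le_max_left (γ/γ₀) 1)
        have h2 : γ / q x ≤ c * (γ₀ / q x) := by
          rw [← mul_div_assoc]
          exact div_le_div_of_nonneg_right hγc hqx.le
        have h1 : 1 + γ / q x ≤ c * (1 + γ₀ / q x) := by nlinarith
        calc g γ x = q x * Real.log (1 + γ / q x) := rfl
          _ ≤ q x * Real.log (c * (1 + γ₀ / q x)) := by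
              apply mul_le_mul_of_nonneg_left _ (hq_nonneg x)
              apply Real.log_le_log _ h1
              have := div_nonneg hγ.le hqx.le
              linarith
          _ = q x * (Real.log c + Real.log (1 + γ₀ / q x)) := by
              rw [Real.log_mul (by positivity) (by positivity)]
          _ = q x * Real.log c + g γ₀ x := by rw [mul_add]
    have hle : D γ ≤ ENNReal.ofReal (Real.log c) + D γ₀ := by
      rw [hDfull γ, hDfull γ₀]
      calc (∫⁻ x, ENNReal.ofReal (g γ x))
          ≤ ∫⁻ x, (ENNReal.ofReal (q x) * ENNReal.ofReal (Real.log c)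
              + ENNReal.ofReal (g γ₀ x)) := by
            apply lintegral_mono
            intro x
            calc ENNReal.ofReal (g γ x)
                ≤ ENNReal.ofReal (q x * Real.log c + g γ₀ x) :=
                  ENNReal.ofReal_le_ofReal (hbound x)
              _ ≤ ENNReal.ofReal (q x * Real.log c) + ENNReal.ofReal (g γ₀ x) :=
                  ENNReal.ofReal_add_le
              _ = ENNReal.ofReal (q x) * ENNReal.ofReal (Real.log c)
                  + ENNReal.ofReal (g γ₀ x) := by
                  rw [ENNReal.ofReal_mul (hq_nonneg x)]
        _ = (∫⁻ x, ENNReal.ofReal (q x) * ENNReal.ofReal (Real.log c))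
            + ∫⁻ x, ENNReal.ofReal (g γ₀ x) := by
            rw [lintegral_add_right _ ((hg_meas γ₀).ennreal_ofReal)]
        _ = ENNReal.ofReal (Real.log c) + ∫⁻ x, ENNReal.ofReal (g γ₀ x) := by
            rw [lintegral_mul_const _ (hq_meas.ennreal_ofReal), hone, one_mul]
        _ = ENNReal.ofReal (Real.log c) + ∫⁻ x, ENNReal.ofReal (g γ₀ x) := rfl
    exact ne_top_of_le_ne_top (ENNReal.add_ne_top.mpr ⟨ENNReal.ofReal_ne_top, hDγ₀⟩) hle
  -- positive and negative parts
  set P : ℝ → ℝ≥0∞ := fun γ => ∫⁻ x, ENNReal.ofReal (f γ x) with hP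
  set N : ℝ → ℝ≥0∞ := fun γ => ∫⁻ x, ENNReal.ofReal (-(f γ x)) with hN
  have hEgPN : ∀ γ, Eg γ = (P γ : EReal) - (N γ : EReal) := fun γ => hEg γ
  -- main splitting identity
  have hkey : ∀ γ : ℝ, 0 < γ → P γ + N 0 = P 0 + N γ + D γ := by
    intro γ hγ
    rw [hDfull γ]
    simp only [hP, hN]
    rw [← lintegral_add_left ((hf_meas γ).ennreal_ofReal),
      ← lintegral_add_left ((hf_meas 0).ennreal_ofReal),
      ← lintegral_add_left (f := fun x => ENNReal.ofReal (f 0 x) + ENNReal.ofReal (-(f γ x)))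
        ((hf_meas 0).ennreal_ofReal.add ((hf_meas γ).neg.ennreal_ofReal))]
    apply lintegral_congr
    intro x
    have := ofReal_add_split (f 0 x) (g γ x) (hg_nonneg γ hγ.le x)
    rw [← hsplit γ hγ.le x] at this
    simpa using this
  have hNle : ∀ γ : ℝ, 0 < γ → N γ ≤ N 0 := by
    intro γ hγ
    apply lintegral_mono
    intro x
    apply ENNReal.ofReal_le_ofReal
    have := hg_nonneg γ hγ.le x
    rw [hsplit γ hγ.le x]
    linarith
  have hN0le : ∀ γ : ℝ, 0 < γ → N 0 ≤ N γ + D γ := by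
    intro γ hγ
    rw [hDfull γ, hN, ← lintegral_add_right _ ((hg_meas γ).ennreal_ofReal)]
    apply lintegral_mono
    intro x
    calc ENNReal.ofReal (-(f 0 x)) = ENNReal.ofReal (-(f γ x) + g γ x) := by
          rw [hsplit γ hγ.le x]; congr 1; ring
      _ ≤ ENNReal.ofReal (-(f γ x)) + ENNReal.ofReal (g γ x) := ENNReal.ofReal_add_le
  -- item (2)
  have item2 : ∀ γ : ℝ, 0 < γ → Eg γ = Eg 0 + ((D γ : ℝ≥0∞) : EReal) := by
    intro γ hγ
    rw [hEgPN γ, hEgPN 0]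
    exact ereal_sub_helper (P 0) (P γ) (N 0) (N γ) (D γ) (hDfin γ hγ) (hNle γ hγ)
      (hN0le γ hγ) (hkey γ hγ)
  -- item (1)
  have item1 : ∀ γ : ℝ, 0 < γ → Eg 0 ≤ Eg γ := by
    intro γ hγ
    rw [item2 γ hγ]
    exact le_add_of_nonneg_right (EReal.coe_ennreal_nonneg _)
  -- item (3)
  have item3 : ∀ γ₁ γ₂ : ℝ, 0 < γ₁ → γ₁ ≤ γ₂ → D γ₁ ≤ D γ₂ := by
    intro γ₁ γ₂ h1 h12
    rw [hDfull γ₁, hDfull γ₂]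
    exact lintegral_mono (hg_mono γ₁ γ₂ h1.le h12)
  -- D tends to 0
  have hDto : Tendsto (fun γ => D γ) (𝓝[>] (0:ℝ)) (𝓝 0) := by
    rw [ENNReal.tendsto_nhds_zero]
    intro ε hε
    -- along the sequence γ₀ / (n+1), D tends to 0
    have hseqD : Tendsto (fun n : ℕ => D (γ₀ / (n + 1))) atTop (𝓝 0) := by
      have h0 : (0:ℝ≥0∞) = ∫⁻ _x : (Fin dx → ℝ), (0:ℝ≥0∞) := by simp
      have := tendsto_lintegral_of_dominated_convergence
        (μ := (volume : Measure (Fin dx → ℝ)))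
        (F := fun n x => ENNReal.ofReal (g (γ₀ / (n+1)) x))
        (f := fun _ => 0)
        (fun x => ENNReal.ofReal (g γ₀ x))
        (fun n => (hg_meas _).ennreal_ofReal)
        (fun n => Filter.Eventually.of_forall (fun x => hg_mono (γ₀ / (n+1)) γ₀
          (by positivity) (by
            rw [div_le_iff₀ (by positivity : (0:ℝ) < (n:ℝ)+1)]
            nlinarith [Nat.cast_nonneg (α := ℝ) n, hγ₀.le]) x))
        (by rw [← hDfull γ₀]; exact hDγ₀)
        ?_
      · simpa only [hDfull, lintegral_zero] using this
      · apply Filter.Eventually.of_forall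
        intro x
        by_cases hx : q x = 0
        · simp [hg, hx]
        · have hqx : 0 < q x := (hq_nonneg x).lt_of_ne (Ne.symm hx)
          have hseq : Tendsto (fun n : ℕ => γ₀ / (n + 1)) atTop (𝓝 0) := by
            have := tendsto_one_div_add_atTop_nhds_zero_nat (𝕜 := ℝ)
            have h := this.const_mul γ₀
            simpa [div_eq_mul_inv, mul_comm, mul_assoc, mul_left_comm] using h
          have hcont : ContinuousAt
              (fun γ : ℝ => ENNReal.ofReal (q x * Real.log (1 + γ / q x))) 0 := by
            apply ENNReal.continuous_ofReal.continuousAt.comp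
            apply ContinuousAt.mul continuousAt_const
            apply (Real.continuousAt_log (by norm_num)).comp
            exact (continuousAt_const.add (continuousAt_id.div continuousAt_const hqx.ne'))
          have := hcont.tendsto.comp hseq
          simpa [hg, Function.comp_def] using this
    have := (ENNReal.tendsto_nhds_zero.mp hseqD ε hε).exists
    obtain ⟨n, hn⟩ := this
    have hδpos : (0:ℝ) < γ₀ / (n + 1) := by positivity
    filter_upwards [Ioo_mem_nhdsGT hδpos] with γ hγ
    exact le_trans (item3 γ (γ₀ / (n+1)) hγ.1 hγ.2.le) hn
  -- item (4)
  have hDtoE : Tendsto (fun γ => ((D γ : ℝ≥0∞) : EReal)) (𝓝[>] (0:ℝ)) (𝓝 (0 : EReal)) := by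
    have : Tendsto ((↑) : ℝ≥0∞ → EReal) (𝓝 0) (𝓝 ((0:ℝ≥0∞) : EReal)) :=
      continuous_coe_ennreal_ereal.continuousAt
    simpa [Function.comp_def] using this.comp hDto
  have item4 : Tendsto Eg (𝓝[>] (0:ℝ)) (𝓝 (Eg 0)) := by
    have heq : (fun γ => Eg 0 + ((D γ : ℝ≥0∞) : EReal)) =ᶠ[𝓝[>] (0:ℝ)] Eg := by
      filter_upwards [self_mem_nhdsWithin] with γ hγ
      exact (item2 γ hγ).symm
    have hcont : ContinuousAt (fun pr : EReal × EReal => pr.1 + pr.2) (Eg 0, 0) :=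
      EReal.continuousAt_add (Or.inr (by simp)) (Or.inr (by simp))
    have htend : Tendsto (fun γ => Eg 0 + ((D γ : ℝ≥0∞) : EReal)) (𝓝[>] (0:ℝ))
        (𝓝 (Eg 0 + 0)) :=
      (hcont.tendsto).comp (tendsto_const_nhds.prodMk_nhds hDtoE)
    rw [add_zero] at htend
    exact htend.congr' heq
  -- item (5)
  have item5 : Tendsto (fun γ => Eg γ + R) (𝓝[>] (0:ℝ)) (𝓝 (Eg 0 + R)) := by
    by_cases hbot : Eg 0 = ⊥
    · have heq : (fun γ => Eg 0 + R) =ᶠ[𝓝[>] (0:ℝ)] (fun γ => Eg γ + R) := by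
        filter_upwards [self_mem_nhdsWithin] with γ hγ
        rw [item2 γ hγ, hbot, EReal.bot_add, EReal.bot_add, EReal.bot_add]
      exact tendsto_const_nhds.congr' heq
    · have hcont : ContinuousAt (fun pr : EReal × EReal => pr.1 + pr.2) (Eg 0, R) :=
        EReal.continuousAt_add (Or.inr hR) (Or.inl hbot)
      exact (hcont.tendsto).comp (item4.prodMk_nhds tendsto_const_nhds)
  exact ⟨item1, item2, item3, item4, item5⟩
end

section
/- Let μ : ℝ^{d_θ} × ℝ^{d_z} → ℝ^{d_x}, written μ_θ(z), be differentiable with ‖∇_{(θ,z)} μ_θ(z)‖_F ≤ B_μ for all (θ, z), and suppose there is K_μ > 0 such that ‖μ_θ(z) − μ_{θ'}(z')‖ ≤ K_μ ‖(θ, z) − (θ', z')‖ and ‖∇_{(θ,z)} μ_θ(z) − ∇_{(θ,z)} μ_{θ'}(z')‖_F ≤ K_μ ‖(θ, z) − (θ', z')‖ for all (θ, z), (θ', z'). Let Σ ∈ ℝ^{d_x × d_x} be symmetric positive definite and define the Gaussian kernel k_θ(x|z) := (2π)^{−d_x/2} det(Σ)^{−1/2} exp(−½ (x − μ_θ(z))ᵀ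 Σ^{−1} (x − μ_θ(z))). Then k_θ satisfies the kernel regularity assumption: (i) there exists B > 0 with k_θ(x|z) + ‖∇_{(θ,x,z)} k_θ(x|z)‖ ≤ B for all (θ, x, z); and (ii) there exists K > 0 with ‖∇_x k_θ(x|z) − ∇_x k_{θ'}(x'|z')‖ ≤ K ‖(θ, x, z) − (θ', x', z')‖ for all (θ, x, z), (θ', x', z'). -/
set_option maxHeartbeats 4000000

open MeasureTheory Filter Topology Matrix
open scoped RealInnerProductSpace

/-- Shorthand for Euclidean space `ℝ^n`. -/
abbrev Esp (n : ℕ) : Type := EuclideanSpace ℝ (Fin n)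


theorem gk_exp_sq_bound {c : ℝ} (hc : 0 < c) (t : ℝ) (ht : 0 ≤ t) :
    t ^ 2 * Real.exp (-(c * t ^ 2) / 2) ≤ 2 / c := by
  rcases eq_or_lt_of_le ht with h | h
  · rw [← h]
    simp
    positivity
  · have h1 : c * t ^ 2 / 2 ≤ Real.exp (c * t ^ 2 / 2) :=
      le_trans (by linarith [Real.add_one_le_exp (c * t ^ 2 / 2)]) le_rfl
    have h2 : Real.exp (-(c * t ^ 2) / 2) ≤ (c * t ^ 2 / 2)⁻¹ := by
      rw [show -(c * t ^ 2) / 2 = -(c * t ^ 2 / 2) by ring, Real.exp_neg]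
      exact inv_anti₀ (by positivity) h1
    calc t ^ 2 * Real.exp (-(c * t ^ 2) / 2) ≤ t ^ 2 * (c * t ^ 2 / 2)⁻¹ := by
          exact mul_le_mul_of_nonneg_left h2 (by positivity)
      _ = 2 / c := by field_simp
  
theorem gk_exp_lin_bound {c : ℝ} (hc : 0 < c) (t : ℝ) (ht : 0 ≤ t) :
    t * Real.exp (-(c * t ^ 2) / 2) ≤ 1 + 2 / c := by
  have h2c : (0:ℝ) < 2 / c := by positivity
  rcases le_or_gt t 1 with h | h
  · have h1 : Real.exp (-(c * t ^ 2) / 2) ≤ 1 :=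
      Real.exp_le_one_iff.2 (by nlinarith)
    have : t * Real.exp (-(c * t ^ 2) / 2) ≤ 1 :=
      mul_le_one₀ h (Real.exp_nonneg _) h1
    linarith
  · have h2 : t ≤ t ^ 2 := by nlinarith
    have := gk_exp_sq_bound hc t ht
    have hexp := Real.exp_pos (-(c * t ^ 2) / 2)
    nlinarith

theorem gauss_pack {n : ℕ} (L : Esp n →L[ℝ] Esp n)
    (hsym : ∀ v w : Esp n, ⟪L v, w⟫ = ⟪v, L w⟫)
    (c : ℝ) (hc : 0 < c) (hcoer : ∀ v : Esp n, c * ‖v‖ ^ 2 ≤ ⟪v, L v⟫) :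
    ∃ (F : Esp n → (Esp n →L[ℝ] ℝ)) (M K : ℝ), 0 < M ∧ 0 < K ∧
      (∀ v, HasFDerivAt (fun u : Esp n => Real.exp (-(1/2) * ⟪u, L u⟫)) (F v) v) ∧
      (∀ v, ‖F v‖ ≤ M) ∧
      (∀ v w, ‖F v - F w‖ ≤ K * ‖v - w‖) := by
  set g : Esp n → ℝ := fun u => Real.exp (-(1/2) * ⟪u, L u⟫) with hg_def
  let Tlin : Esp n →ₗ[ℝ] (Esp n →L[ℝ] ℝ) :=
    { toFun := fun v => innerSL ℝ (L v)
      map_add' := by intro u v; ext w; simp [inner_add_left]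
      map_smul' := by intro a v; ext w; simp [real_inner_smul_left] }
  let T : Esp n →L[ℝ] (Esp n →L[ℝ] ℝ) := LinearMap.toContinuousLinearMap Tlin
  have hT_apply : ∀ v w : Esp n, T v w = ⟪L v, w⟫ := fun v w => rfl
  have hTnorm : ∀ v : Esp n, ‖T v‖ = ‖L v‖ := by
    intro v
    show ‖innerSL ℝ (L v)‖ = ‖L v‖
    exact innerSL_apply_norm ℝ (L v)
  -- derivative of quadratic form
  have hq : ∀ v : Esp n, HasFDerivAt (fun u : Esp n => ⟪u, L u⟫) ((2:ℝ) • T v) v := by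
    intro v
    have h := HasFDerivAt.inner (E := Esp n) (G := Esp n) ℝ (hasFDerivAt_id v) (L.hasFDerivAt (x := v))
    refine h.congr_fderiv ?_
    ext w
    simp only [ContinuousLinearMap.smul_apply, hT_apply, fderivInnerCLM_apply,
      ContinuousLinearMap.comp_apply, ContinuousLinearMap.prod_apply,
      ContinuousLinearMap.coe_id', id_eq, smul_eq_mul]
    have e1 : ⟪v, L w⟫ = ⟪w, L v⟫ := by rw [← hsym v w, real_inner_comm]
    linarith [hsym v w, e1]
  set F : Esp n → (Esp n →L[ℝ] ℝ) := fun v => (-(g v)) • T v with hF_def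
  have hFd : ∀ v : Esp n, HasFDerivAt g (F v) v := by
    intro v
    have h1 : HasFDerivAt (fun u : Esp n => -(1/2) * ⟪u, L u⟫)
        ((-(1/2):ℝ) • ((2:ℝ) • T v)) v := (hq v).const_mul _
    have h2 := h1.exp
    refine h2.congr_fderiv ?_
    ext w
    simp only [hF_def, ContinuousLinearMap.smul_apply, smul_eq_mul, ContinuousLinearMap.neg_apply]
    ring
  have hq_nonneg : ∀ v : Esp n, (0:ℝ) ≤ ⟪v, L v⟫ := fun v =>
    le_trans (by positivity) (hcoer v)
  have hg_pos : ∀ v, 0 < g v := fun v => Real.exp_pos _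
  have hg_le_one : ∀ v, g v ≤ 1 := by
    intro v
    exact Real.exp_le_one_iff.2 (by nlinarith [hq_nonneg v])
  have hg_decay : ∀ v, g v ≤ Real.exp (-(c * ‖v‖ ^ 2) / 2) := by
    intro v
    exact Real.exp_le_exp.2 (by nlinarith [hcoer v])
  have hbd1 : ∀ v : Esp n, ‖v‖ * g v ≤ 1 + 2 / c := by
    intro v
    calc ‖v‖ * g v ≤ ‖v‖ * Real.exp (-(c * ‖v‖ ^ 2) / 2) :=
          mul_le_mul_of_nonneg_left (hg_decay v) (norm_nonneg v)
      _ ≤ 1 + 2 / c := gk_exp_lin_bound hc _ (norm_nonneg v)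
  have hbd2 : ∀ v : Esp n, ‖v‖ ^ 2 * g v ≤ 2 / c := by
    intro v
    calc ‖v‖ ^ 2 * g v ≤ ‖v‖ ^ 2 * Real.exp (-(c * ‖v‖ ^ 2) / 2) :=
          mul_le_mul_of_nonneg_left (hg_decay v) (by positivity)
      _ ≤ 2 / c := gk_exp_sq_bound hc _ (norm_nonneg v)
  have hFnorm : ∀ v, ‖F v‖ = g v * ‖L v‖ := by
    intro v
    have h1 : ‖F v‖ = ‖-(g v)‖ * ‖T v‖ := norm_smul (-(g v)) (T v)
    rw [h1, norm_neg, Real.norm_eq_abs, abs_of_pos (hg_pos v), hTnorm v]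
  have hFbound : ∀ v, ‖F v‖ ≤ ‖L‖ * (1 + 2 / c) := by
    intro v
    rw [hFnorm v]
    calc g v * ‖L v‖ ≤ g v * (‖L‖ * ‖v‖) :=
          mul_le_mul_of_nonneg_left (L.le_opNorm v) (le_of_lt (hg_pos v))
      _ = ‖L‖ * (‖v‖ * g v) := by ring
      _ ≤ ‖L‖ * (1 + 2 / c) := mul_le_mul_of_nonneg_left (hbd1 v) (norm_nonneg L)
  -- second derivative
  set DF : Esp n → (Esp n →L[ℝ] (Esp n →L[ℝ] ℝ)) :=
    fun v => (-(g v)) • T + (-(F v)).smulRight (T v) with hDF_def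
  have hDFd : ∀ v : Esp n, HasFDerivAt F (DF v) v := by
    intro v
    exact ((hFd v).neg).smul (T.hasFDerivAt)
  have hTle : ‖T‖ ≤ ‖L‖ := by
    refine ContinuousLinearMap.opNorm_le_bound _ (norm_nonneg L) ?_
    intro v
    rw [hTnorm v]
    exact L.le_opNorm v
  have hDFbound : ∀ v, ‖DF v‖ ≤ ‖L‖ * 1 + ‖L‖ ^ 2 * (2 / c) := by
    intro v
    show ‖(-(g v)) • T + (-(F v)).smulRight (T v)‖ ≤ _
    refine le_trans (norm_add_le ((-(g v)) • T) ((-(F v)).smulRight (T v))) ?_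
    have h1 : ‖(-(g v)) • T‖ ≤ ‖L‖ * 1 := by
      refine ContinuousLinearMap.opNorm_le_bound _ (by positivity) (fun u => ?_)
      have e : ((-(g v)) • T) u = (-(g v)) • (T u) := rfl
      rw [e]
      have e2 : ‖(-(g v)) • T u‖ = ‖-(g v)‖ * ‖T u‖ := norm_smul (-(g v)) (T u)
      rw [e2, norm_neg, Real.norm_eq_abs, abs_of_pos (hg_pos v), hTnorm u]
      calc g v * ‖L u‖ ≤ 1 * (‖L‖ * ‖u‖) :=
            mul_le_mul (hg_le_one v) (L.le_opNorm u) (norm_nonneg _) zero_le_one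
        _ = ‖L‖ * 1 * ‖u‖ := by ring
    have h2 : ‖(-(F v)).smulRight (T v)‖ ≤ ‖L‖ ^ 2 * (2 / c) := by
      have h2' : ‖(-(F v)).smulRight (T v)‖ = ‖-(F v)‖ * ‖T v‖ :=
        ContinuousLinearMap.norm_smulRight_apply (-(F v)) (T v)
      rw [h2', norm_neg, hFnorm v, hTnorm v]
      calc g v * ‖L v‖ * ‖L v‖ ≤ g v * (‖L‖ * ‖v‖) * (‖L‖ * ‖v‖) := by
            have hle := L.le_opNorm v
            have hsq : ‖L v‖ * ‖L v‖ ≤ (‖L‖ * ‖v‖) * (‖L‖ * ‖v‖) :=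
              mul_le_mul hle hle (norm_nonneg _) (by positivity)
            nlinarith [hsq, hg_pos v]
        _ = ‖L‖ ^ 2 * (‖v‖ ^ 2 * g v) := by ring
        _ ≤ ‖L‖ ^ 2 * (2 / c) := mul_le_mul_of_nonneg_left (hbd2 v) (by positivity)
    linarith
  refine ⟨F, ‖L‖ * (1 + 2 / c) + 1, (‖L‖ * 1 + ‖L‖ ^ 2 * (2 / c)) + 1, ?_, ?_, hFd, ?_, ?_⟩
  · have : (0:ℝ) ≤ ‖L‖ * (1 + 2 / c) := by positivity
    linarith
  · have : (0:ℝ) ≤ ‖L‖ * 1 + ‖L‖ ^ 2 * (2 / c) := by positivity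
    linarith
  · intro v; linarith [hFbound v]
  · intro v w
    have h := Convex.norm_image_sub_le_of_norm_hasFDerivWithin_le
      (f := F) (f' := DF) (s := Set.univ)
      (fun x _ => (hDFd x).hasFDerivWithinAt)
      (fun x _ => hDFbound x) convex_univ (Set.mem_univ w) (Set.mem_univ v)
    have hnn : (0:ℝ) ≤ ‖v - w‖ := norm_nonneg _
    nlinarith [h]


theorem gk_coercive {n : ℕ} (L : Esp n →L[ℝ] Esp n)
    (hpos : ∀ v : Esp n, v ≠ 0 → 0 < ⟪v, L v⟫) :
    ∃ c : ℝ, 0 < c ∧ ∀ v : Esp n, c * ‖v‖ ^ 2 ≤ ⟪v, L v⟫ := by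
  by_cases hn : Nontrivial (Esp n)
  · have hsph : (Metric.sphere (0 : Esp n) 1).Nonempty :=
      NormedSpace.sphere_nonempty.2 zero_le_one
    have hcmp : IsCompact (Metric.sphere (0 : Esp n) 1) := isCompact_sphere 0 1
    have hcont : Continuous fun v : Esp n => ⟪v, L v⟫ := continuous_id.inner L.continuous
    obtain ⟨v0, hv0, hmin⟩ := hcmp.exists_isMinOn hsph hcont.continuousOn
    have hv0n : ‖v0‖ = 1 := by simpa using hv0
    have hv0ne : v0 ≠ 0 := by
      intro h; rw [h] at hv0n; simp at hv0n
    refine ⟨⟪v0, L v0⟫, hpos v0 hv0ne, fun v => ?_⟩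
    rcases eq_or_ne v 0 with h | h
    · simp [h]
    · have hvn : 0 < ‖v‖ := norm_pos_iff.2 h
      have hu : (‖v‖⁻¹ • v) ∈ Metric.sphere (0 : Esp n) 1 := by
        rw [mem_sphere_zero_iff_norm, norm_smul, norm_inv, norm_norm]
        exact inv_mul_cancel₀ (ne_of_gt hvn)
      have h1 : ⟪v0, L v0⟫ ≤ ⟪‖v‖⁻¹ • v, L (‖v‖⁻¹ • v)⟫ := hmin hu
      have h2 : ⟪‖v‖⁻¹ • v, L (‖v‖⁻¹ • v)⟫ = ‖v‖⁻¹ * (‖v‖⁻¹ * ⟪v, L v⟫) := by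
        rw [_root_.map_smul, real_inner_smul_left, real_inner_smul_right]
      rw [h2] at h1
      have key : ‖v‖ ^ 2 * (‖v‖⁻¹ * (‖v‖⁻¹ * ⟪v, L v⟫)) = ⟪v, L v⟫ := by
        field_simp
      nlinarith [mul_le_mul_of_nonneg_left h1 (le_of_lt (mul_pos hvn hvn)),
        sq_nonneg ‖v‖]
  · refine ⟨1, one_pos, fun v => ?_⟩
    have hs : Subsingleton (Esp n) := not_nontrivial_iff_subsingleton.1 hn
    have hv : v = 0 := Subsingleton.elim v 0
    simp [hv]

/-- The Gaussian kernel `k_θ(x|z) = N(x; μ_θ(z), Σ)` with a mean map `μ_θ(z)` that is bounded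
Lipschitz with Lipschitz gradient, and fixed symmetric positive definite covariance `Σ`,
satisfies the kernel regularity assumptions: the kernel and its `(θ, x, z)`-gradient are bounded,
and its `x`-gradient is jointly Lipschitz in `(θ, x, z)`. -/
theorem gaussian_kernel_regularity {dθ dx dz : ℕ} (Bμ Kμ : ℝ) (hBμ : 0 < Bμ) (hKμ : 0 < Kμ)
    (μf : Esp dθ → Esp dz → Esp dx)
    (hμ_diff : Differentiable ℝ (fun q : Esp dθ × Esp dz => μf q.1 q.2))
    (hμ_grad_bdd : ∀ (θ : Esp dθ) (z : Esp dz),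
      ‖fderiv ℝ (fun q : Esp dθ × Esp dz => μf q.1 q.2) (θ, z)‖ ≤ Bμ)
    (hμ_lip : ∀ (θ θ' : Esp dθ) (z z' : Esp dz),
      ‖μf θ z - μf θ' z'‖ ≤ Kμ * ‖((θ, z) : Esp dθ × Esp dz) - (θ', z')‖)
    (hμ_grad_lip : ∀ (θ θ' : Esp dθ) (z z' : Esp dz),
      ‖fderiv ℝ (fun q : Esp dθ × Esp dz => μf q.1 q.2) (θ, z) -
          fderiv ℝ (fun q : Esp dθ × Esp dz => μf q.1 q.2) (θ', z')‖ ≤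
        Kμ * ‖((θ, z) : Esp dθ × Esp dz) - (θ', z')‖)
    (Sig : Matrix (Fin dx) (Fin dx) ℝ) (hSig : Sig.PosDef)
    (k : Esp dθ → Esp dx → Esp dz → ℝ)
    (hk : ∀ (θ : Esp dθ) (x : Esp dx) (z : Esp dz),
      k θ x z = (2 * Real.pi) ^ (-(dx : ℝ) / 2) * Sig.det ^ (-(1 : ℝ) / 2) *
        Real.exp (-(1 / 2) *
          ((fun i => x i - μf θ z i) ⬝ᵥ (Sig⁻¹ *ᵥ (fun i => x i - μf θ z i))))) :
    (Differentiable ℝ (fun q : Esp dθ × Esp dx × Esp dz => k q.1 q.2.1 q.2.2) ∧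
      ∃ B : ℝ, 0 < B ∧ ∀ (θ : Esp dθ) (x : Esp dx) (z : Esp dz),
        k θ x z + ‖fderiv ℝ (fun q : Esp dθ × Esp dx × Esp dz => k q.1 q.2.1 q.2.2)
          (θ, x, z)‖ ≤ B) ∧
    (∃ K : ℝ, 0 < K ∧ ∀ (θ θ' : Esp dθ) (x x' : Esp dx) (z z' : Esp dz),
      ‖gradient (fun y => k θ y z) x - gradient (fun y => k θ' y z') x'‖ ≤
        K * ‖((θ, x, z) : Esp dθ × Esp dx × Esp dz) - (θ', x', z')‖) := by
  -- the normalizing constant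
  set c0 : ℝ := (2 * Real.pi) ^ (-(dx : ℝ) / 2) * Sig.det ^ (-(1:ℝ) / 2) with hc0_def
  have hc0 : 0 < c0 := by
    have h1 : (0:ℝ) < 2 * Real.pi := by positivity
    exact mul_pos (Real.rpow_pos_of_pos h1 _) (Real.rpow_pos_of_pos hSig.det_pos _)
  -- the inverse covariance as a continuous linear map
  have hA : (Sig⁻¹).PosDef := hSig.inv
  set L : Esp dx →L[ℝ] Esp dx :=
    LinearMap.toContinuousLinearMap (Matrix.toEuclideanLin Sig⁻¹) with hL_def
  have hdot : ∀ v : Esp dx, ⟪v, L v⟫ = v ⬝ᵥ (Sig⁻¹ *ᵥ v) := by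
    intro v
    simp [hL_def, PiLp.inner_apply, dotProduct, Matrix.toEuclideanLin_apply]
    exact Finset.sum_congr rfl fun i _ => mul_comm _ _
  have hLsym : ∀ v w : Esp dx, ⟪L v, w⟫ = ⟪v, L w⟫ := fun v w =>
    (Matrix.isHermitian_iff_isSymmetric.1 hA.1) v w
  have hLpos : ∀ v : Esp dx, v ≠ 0 → 0 < ⟪v, L v⟫ := by
    intro v hv
    have h := hA.dotProduct_mulVec_pos (show WithLp.ofLp v ≠ 0 by simpa using hv)
    rw [hdot v]
    simpa using h
  obtain ⟨c, hc, hcoer⟩ := gk_coercive L hLpos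
  obtain ⟨F, M, K, hM, hK, hFd, hFbd, hFlip⟩ := gauss_pack L hLsym c hc hcoer
  set g : Esp dx → ℝ := fun u => Real.exp (-(1/2) * ⟪u, L u⟫) with hg_def
  have hg_pos : ∀ u, 0 < g u := fun u => Real.exp_pos _
  have hg_le_one : ∀ u : Esp dx, g u ≤ 1 := by
    intro u
    have h0 : (0:ℝ) ≤ ⟪u, L u⟫ := le_trans (by positivity) (hcoer u)
    exact Real.exp_le_one_iff.2 (by nlinarith)
  -- rewriting the kernel
  have hkeq : ∀ (θ : Esp dθ) (x : Esp dx) (z : Esp dz),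
      k θ x z = c0 * g (x - μf θ z) := by
    intro θ x z
    rw [hk θ x z, hg_def]
    have h1 : ⟪x - μf θ z, L (x - μf θ z)⟫ =
        (fun i => x i - μf θ z i) ⬝ᵥ (Sig⁻¹ *ᵥ (fun i => x i - μf θ z i)) := hdot _
    rw [← h1]
  -- the inner affine map and its derivative
  set m : Esp dθ × Esp dx × Esp dz → Esp dx := fun p => p.2.1 - μf p.1 p.2.2 with hm_def
  set P : (Esp dθ × Esp dx × Esp dz) →L[ℝ] (Esp dθ × Esp dz) :=
    (ContinuousLinearMap.fst ℝ (Esp dθ) (Esp dx × Esp dz)).prod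
      ((ContinuousLinearMap.snd ℝ (Esp dx) (Esp dz)).comp
        (ContinuousLinearMap.snd ℝ (Esp dθ) (Esp dx × Esp dz))) with hP_def
  set πx : (Esp dθ × Esp dx × Esp dz) →L[ℝ] Esp dx :=
    (ContinuousLinearMap.fst ℝ (Esp dx) (Esp dz)).comp
      (ContinuousLinearMap.snd ℝ (Esp dθ) (Esp dx × Esp dz)) with hπx_def
  set Dm : (Esp dθ × Esp dx × Esp dz) → ((Esp dθ × Esp dx × Esp dz) →L[ℝ] Esp dx) :=
    fun p => πx - (fderiv ℝ (fun q : Esp dθ × Esp dz => μf q.1 q.2) (p.1, p.2.2)).comp P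
    with hDm_def
  have hm : ∀ p, HasFDerivAt m (Dm p) p := by
    intro p
    have h1 : HasFDerivAt (fun p : Esp dθ × Esp dx × Esp dz =>
        (fun q : Esp dθ × Esp dz => μf q.1 q.2) (P p))
        ((fderiv ℝ (fun q : Esp dθ × Esp dz => μf q.1 q.2) (P p)).comp P) p :=
      ((hμ_diff (P p)).hasFDerivAt).comp p (P.hasFDerivAt)
    have h2 : HasFDerivAt (fun p : Esp dθ × Esp dx × Esp dz => p.2.1) πx p :=
      πx.hasFDerivAt
    exact h2.sub h1
  have hDm_bd : ∀ p, ‖Dm p‖ ≤ 1 + Bμ := by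
    intro p
    refine ContinuousLinearMap.opNorm_le_bound _ (by positivity) (fun w => ?_)
    have he : (Dm p) w = πx w - (fderiv ℝ (fun q : Esp dθ × Esp dz => μf q.1 q.2)
        (p.1, p.2.2)) (P w) := rfl
    rw [he]
    refine le_trans (norm_sub_le _ _) ?_
    have h1 : ‖πx w‖ ≤ ‖w‖ := by
      have : πx w = w.2.1 := rfl
      rw [this]
      exact le_trans (norm_fst_le w.2) (norm_snd_le w)
    have h2 : ‖P w‖ ≤ ‖w‖ := by
      have : P w = (w.1, w.2.2) := rfl
      rw [this, Prod.norm_def]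
      exact max_le (norm_fst_le w) (le_trans (norm_snd_le w.2) (norm_snd_le w))
    have h3 : ‖(fderiv ℝ (fun q : Esp dθ × Esp dz => μf q.1 q.2) (p.1, p.2.2)) (P w)‖
        ≤ Bμ * ‖w‖ := by
      refine le_trans ((fderiv ℝ (fun q : Esp dθ × Esp dz => μf q.1 q.2)
        (p.1, p.2.2)).le_opNorm _) ?_
      exact mul_le_mul (hμ_grad_bdd p.1 p.2.2) h2 (norm_nonneg _) (le_of_lt hBμ)
    linarith [h1, h3, norm_nonneg w]
  -- the kernel as a function on the product space
  have hkfun : (fun q : Esp dθ × Esp dx × Esp dz => k q.1 q.2.1 q.2.2) =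
      fun p => c0 * g (m p) := funext fun p => hkeq p.1 p.2.1 p.2.2
  have hkd : ∀ p, HasFDerivAt (fun p : Esp dθ × Esp dx × Esp dz => c0 * g (m p))
      (c0 • ((F (m p)).comp (Dm p))) p := by
    intro p
    exact ((hFd (m p)).comp p (hm p)).const_mul c0
  refine ⟨⟨?_, ?_⟩, ?_⟩
  · -- differentiability
    rw [hkfun]
    exact fun p => (hkd p).differentiableAt
  · -- boundedness
    have hBpos : (0:ℝ) < c0 * 1 + c0 * (M * (1 + Bμ)) := by
      have h1 : (0:ℝ) < 1 + Bμ := by linarith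
      have h2 := mul_pos hc0 (mul_pos hM h1)
      nlinarith
    refine ⟨c0 * 1 + c0 * (M * (1 + Bμ)), hBpos, ?_⟩
    intro θ x z
    have hfd : fderiv ℝ (fun q : Esp dθ × Esp dx × Esp dz => k q.1 q.2.1 q.2.2) (θ, x, z)
        = c0 • (F (x - μf θ z)).comp (Dm (θ, x, z)) := by
      rw [hkfun]; exact (hkd (θ, x, z)).fderiv
    rw [hfd, hkeq θ x z]
    have e1 : ‖(F (x - μf θ z)).comp (Dm (θ, x, z))‖ ≤ M * (1 + Bμ) := by
      refine le_trans (ContinuousLinearMap.opNorm_comp_le _ _) ?_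
      exact mul_le_mul (hFbd _) (hDm_bd _) (norm_nonneg _) (le_of_lt hM)
    have e2 : ‖c0 • (F (x - μf θ z)).comp (Dm (θ, x, z))‖ =
        ‖c0‖ * ‖(F (x - μf θ z)).comp (Dm (θ, x, z))‖ :=
      norm_smul c0 ((F (x - μf θ z)).comp (Dm (θ, x, z)))
    rw [e2, Real.norm_eq_abs, abs_of_pos hc0]
    nlinarith [hg_le_one (x - μf θ z), hg_pos (x - μf θ z),
      norm_nonneg ((F (x - μf θ z)).comp (Dm (θ, x, z)))]
  · -- Lipschitz gradient in x
    have hgrad : ∀ (θ : Esp dθ) (z : Esp dz) (x : Esp dx),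
        fderiv ℝ (fun y => k θ y z) x = c0 • F (x - μf θ z) := by
      intro θ z x
      have h0 : (fun y => k θ y z) = fun y : Esp dx => c0 * g (y - μf θ z) :=
        funext fun y => hkeq θ y z
      rw [h0]
      have hsub : HasFDerivAt (fun y : Esp dx => y - μf θ z)
          (ContinuousLinearMap.id ℝ (Esp dx)) x := (hasFDerivAt_id x).sub_const _
      have h' : HasFDerivAt (fun y : Esp dx => c0 * g (y - μf θ z))
          (c0 • (F (x - μf θ z)).comp (ContinuousLinearMap.id ℝ (Esp dx))) x :=
        ((hFd (x - μf θ z)).comp x hsub).const_mul c0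
      rw [h'.fderiv, ContinuousLinearMap.comp_id]
    have hK3 : (0:ℝ) < c0 * (K * (1 + Kμ)) :=
      mul_pos hc0 (mul_pos hK (by linarith))
    refine ⟨c0 * (K * (1 + Kμ)), hK3, ?_⟩
    intro θ θ' x x' z z'
    have hgd : gradient (fun y => k θ y z) x - gradient (fun y => k θ' y z') x' =
        (InnerProductSpace.toDual ℝ (Esp dx)).symm
          (fderiv ℝ (fun y => k θ y z) x - fderiv ℝ (fun y => k θ' y z') x') := by
      rw [map_sub]; rfl
    rw [hgd, LinearIsometryEquiv.norm_map, hgrad θ z x, hgrad θ' z' x', ← smul_sub]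
    have e2 : ‖c0 • (F (x - μf θ z) - F (x' - μf θ' z'))‖ =
        ‖c0‖ * ‖F (x - μf θ z) - F (x' - μf θ' z')‖ := norm_smul c0 (F (x - μf θ z) - F (x' - μf θ' z'))
    rw [e2, Real.norm_eq_abs, abs_of_pos hc0]
    have hF1 : ‖F (x - μf θ z) - F (x' - μf θ' z')‖ ≤
        K * ‖(x - μf θ z) - (x' - μf θ' z')‖ := hFlip _ _
    set p : Esp dθ × Esp dx × Esp dz := (θ, x, z) with hp_def
    set p' : Esp dθ × Esp dx × Esp dz := (θ', x', z') with hp'_def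
    have hxx : ‖x - x'‖ ≤ ‖p - p'‖ := by
      have h1 : x - x' = (p - p').2.1 := rfl
      rw [h1]
      exact le_trans (norm_fst_le (p - p').2) (norm_snd_le (p - p'))
    have hθz : ‖((θ, z) : Esp dθ × Esp dz) - (θ', z')‖ ≤ ‖p - p'‖ := by
      have h1 : ((θ, z) : Esp dθ × Esp dz) - (θ', z') = (θ - θ', z - z') := rfl
      rw [h1, Prod.norm_def]
      refine max_le ?_ ?_
      · have h2 : θ - θ' = (p - p').1 := rfl
        rw [h2]; exact norm_fst_le (p - p')
      · have h3 : z - z' = (p - p').2.2 := rfl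
        rw [h3]; exact le_trans (norm_snd_le (p - p').2) (norm_snd_le (p - p'))
    have hdiff : ‖(x - μf θ z) - (x' - μf θ' z')‖ ≤ (1 + Kμ) * ‖p - p'‖ := by
      have h1 : (x - μf θ z) - (x' - μf θ' z') = (x - x') - (μf θ z - μf θ' z') := by
        abel
      rw [h1]
      refine le_trans (norm_sub_le _ _) ?_
      have h2 := hμ_lip θ θ' z z'
      have h3 : Kμ * ‖((θ, z) : Esp dθ × Esp dz) - (θ', z')‖ ≤ Kμ * ‖p - p'‖ :=
        mul_le_mul_of_nonneg_left hθz (le_of_lt hKμ)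
      linarith [hxx, h2, h3]
    calc c0 * ‖F (x - μf θ z) - F (x' - μf θ' z')‖
        ≤ c0 * (K * ((1 + Kμ) * ‖p - p'‖)) := by
          have h4 : K * ‖(x - μf θ z) - (x' - μf θ' z')‖ ≤ K * ((1 + Kμ) * ‖p - p'‖) :=
            mul_le_mul_of_nonneg_left hdiff (le_of_lt hK)
          have h5 : ‖F (x - μf θ z) - F (x' - μf θ' z')‖ ≤ K * ((1 + Kμ) * ‖p - p'‖) :=
            le_trans hF1 h4
          exact mul_le_mul_of_nonneg_left h5 (le_of_lt hc0)
      _ = c0 * (K * (1 + Kμ)) * ‖p - p'‖ := by ring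
end
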